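/- Let n^PL be the polylogarithmic quotient of the free graded Lie algebra on e_0, e_1 (degree -1), i.e., n/[N,N] where N is the ideal generated by e_1. Then the degree ≤ -2 part of n^PL is abelian: [n^PL_{≤ -2}, n^PL_{≤ -2}] = 0. -/
import Mathlib

noncomputable section

/-- The free Lie algebra over ℚ on two generators `e₀, e₁` (both of degree -1). -/
abbrev FL : Type := FreeLieAlgebra ℚ Bool

def e0 : FL := FreeLieAlgebra.of ℚ false
def e1 : FL := FreeLieAlgebra.of ℚ true

/-- The Lie ideal generated by `e₁`. -/
def N : LieIdeal ℚ FL := LieSubmodule.lieSpan ℚ FL {e1}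

/-- The polylogarithmic quotient `n^PL = n/[N,N]`. -/
abbrev nPL : Type := FL ⧸ (⁅N, N⁆ : LieIdeal ℚ FL)

-- auxiliary material

/-- The Lie subalgebra `ℚ·e0 ⊔ N` of `FL`. -/
def K : LieSubalgebra ℚ FL :=
  { ((ℚ ∙ e0) ⊔ N.toSubmodule : Submodule ℚ FL) with
    lie_mem' := by
      intro x y hx hy
      have hxN : ∀ z w : FL, z ∈ (ℚ ∙ e0) ⊔ N.toSubmodule → w ∈ (ℚ ∙ e0) ⊔ N.toSubmodule →
          ⁅z, w⁆ ∈ N := by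
        intro z w hz hw
        obtain ⟨a, ha, n, hn, rfl⟩ := Submodule.mem_sup.mp hz
        obtain ⟨b, hb, m, hm, rfl⟩ := Submodule.mem_sup.mp hw
        obtain ⟨s, rfl⟩ := Submodule.mem_span_singleton.mp ha
        obtain ⟨t, rfl⟩ := Submodule.mem_span_singleton.mp hb
        have : ⁅s • e0 + n, t • e0 + m⁆ =
            (s * t) • ⁅e0, e0⁆ + s • ⁅e0, m⁆ + (⁅n, t • e0⁆ + ⁅n, m⁆) := by
          simp [lie_add, add_lie, smul_lie, lie_smul, smul_smul]
          abel
        rw [this]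
        refine N.add_mem' (N.add_mem' ?_ ?_) (N.add_mem' ?_ ?_)
        · simp
        · exact N.smul_mem' s (lie_mem_right ℚ FL N e0 m hm)
        · exact lie_mem_left ℚ FL N n (t • e0) hn
        · exact lie_mem_left ℚ FL N n m hn
      exact Submodule.mem_sup_right (hxN x y hx hy) }

lemma e0_mem_K : e0 ∈ K := Submodule.mem_sup_left (Submodule.mem_span_singleton_self e0)

lemma e1_mem_K : e1 ∈ K :=
  Submodule.mem_sup_right (LieSubmodule.subset_lieSpan rfl)

lemma K_eq_top : K = ⊤ := by
  have h : ∀ x : FL, x ∈ K := by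
    intro x
    let f : Bool → K := fun b => if b then ⟨e1, e1_mem_K⟩ else ⟨e0, e0_mem_K⟩
    let g : FL →ₗ⁅ℚ⁆ K := FreeLieAlgebra.lift ℚ f
    have hcomp : K.incl.comp g = LieHom.id := by
      apply FreeLieAlgebra.hom_ext
      intro b
      cases b <;> simp [g, f, FreeLieAlgebra.lift_of_apply, e0, e1]
    have hx : x = (g x : FL) := by
      have h2 := DFunLike.congr_fun hcomp x
      simpa [LieHom.comp_apply] using h2.symm
    rw [hx]; exact (g x).2
  ext x; simpa using h x

lemma bracket_mem_N (x y : FL) : ⁅x, y⁆ ∈ N := by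
  have hx : x ∈ K := by rw [K_eq_top]; trivial
  have hy : y ∈ K := by rw [K_eq_top]; trivial
  obtain ⟨a, ha, n, hn, rfl⟩ := Submodule.mem_sup.mp hx
  obtain ⟨b, hb, m, hm, rfl⟩ := Submodule.mem_sup.mp hy
  obtain ⟨s, rfl⟩ := Submodule.mem_span_singleton.mp ha
  obtain ⟨t, rfl⟩ := Submodule.mem_span_singleton.mp hb
  have : ⁅s • e0 + n, t • e0 + m⁆ =
      (s * t) • ⁅e0, e0⁆ + s • ⁅e0, m⁆ + (⁅n, t • e0⁆ + ⁅n, m⁆) := by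
    simp [lie_add, add_lie, smul_lie, lie_smul, smul_smul]
    abel
  rw [this]
  refine N.add_mem' (N.add_mem' ?_ ?_) (N.add_mem' ?_ ?_)
  · simp
  · exact N.smul_mem' s (lie_mem_right ℚ FL N e0 m hm)
  · exact lie_mem_left ℚ FL N n (t • e0) hn
  · exact lie_mem_left ℚ FL N n m hn

lemma derived_le_N : (⁅(⊤ : LieIdeal ℚ FL), (⊤ : LieIdeal ℚ FL)⁆ : LieIdeal ℚ FL) ≤ N := by
  rw [LieSubmodule.lieIdeal_oper_eq_span, LieSubmodule.lieSpan_le]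
  rintro z ⟨x, y, rfl⟩
  exact bracket_mem_N x y

/-- The quotient map as a Lie algebra homomorphism. -/
def π : FL →ₗ⁅ℚ⁆ nPL :=
  { (⁅N, N⁆ : LieIdeal ℚ FL).toSubmodule.mkQ with
    map_lie' := rfl }

lemma π_surjective : Function.Surjective π := Submodule.mkQ_surjective _

lemma map_π_top : LieIdeal.map π ⊤ = ⊤ := by
  rw [eq_top_iff]
  intro x _
  obtain ⟨y, rfl⟩ := π_surjective x
  exact LieIdeal.mem_map (LieSubmodule.mem_top y)

lemma NN_le_ker : (⁅N, N⁆ : LieIdeal ℚ FL) ≤ π.ker := by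
  intro x hx
  rw [LieHom.mem_ker]
  exact (Submodule.Quotient.mk_eq_zero _).mpr hx

theorem polylog_quotient_low_degrees_abelian :
    ⁅(⁅(⊤ : LieIdeal ℚ nPL), (⊤ : LieIdeal ℚ nPL)⁆ : LieIdeal ℚ nPL),
      (⁅(⊤ : LieIdeal ℚ nPL), (⊤ : LieIdeal ℚ nPL)⁆ : LieIdeal ℚ nPL)⁆
    = (⊥ : LieIdeal ℚ nPL) := by
  have h1 : (⁅(⊤ : LieIdeal ℚ nPL), (⊤ : LieIdeal ℚ nPL)⁆ : LieIdeal ℚ nPL)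
      = LieIdeal.map π ⁅(⊤ : LieIdeal ℚ FL), (⊤ : LieIdeal ℚ FL)⁆ := by
    rw [LieIdeal.map_bracket_eq π π_surjective, map_π_top]
  rw [h1, ← LieIdeal.map_bracket_eq π π_surjective]
  rw [eq_bot_iff]
  calc LieIdeal.map π ⁅(⁅(⊤ : LieIdeal ℚ FL), (⊤ : LieIdeal ℚ FL)⁆ : LieIdeal ℚ FL),
        (⁅(⊤ : LieIdeal ℚ FL), (⊤ : LieIdeal ℚ FL)⁆ : LieIdeal ℚ FL)⁆
      ≤ LieIdeal.map π ⁅N, N⁆ :=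
        LieIdeal.map_mono (LieSubmodule.mono_lie derived_le_N derived_le_N)
    _ ≤ ⊥ := le_of_eq (LieIdeal.map_eq_bot_iff.mpr NN_le_ker)
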